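/- Let e = [0,1] with barycentric coordinates λ0 = 1−t, λ1 = t, and let k ≥ 7. The map d/dt sends (λ0λ1)^4 P_{k−7}(e) bijectively onto the L²-orthogonal complement of constants in (λ0λ1)^3 P_{k−6}(e); i.e., the sequence 0 → (λ0λ1)^4 P_{k−7}(e) → (λ0λ1)^3 P_{k−6}(e)/P_0(e) → 0 is an exact complex. -/
import Mathlib

open Polynomial

/-- FTC for polynomials on `[0,1]`. -/
lemma integral_deriv_poly (f : Polynomial ℝ) :
    (∫ t in (0:ℝ)..1, (derivative f).eval t) = f.eval 1 - f.eval 0 := by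
  refine intervalIntegral.integral_eq_sub_of_hasDerivAt
    (fun x _ => f.hasDerivAt x) ?_
  exact (Polynomial.continuous _).intervalIntegrable 0 1

/-- Formal antiderivative. -/
noncomputable def antideriv (q : Polynomial ℝ) : Polynomial ℝ :=
  q.sum fun n a => C (a / (n + 1)) * X ^ (n + 1)

lemma antideriv_deriv (q : Polynomial ℝ) : derivative (antideriv q) = q := by
  rw [antideriv, Polynomial.sum, map_sum]
  conv_rhs => rw [← q.sum_C_mul_X_pow_eq]
  rw [Polynomial.sum]
  refine Finset.sum_congr rfl fun n _ => ?_
  rw [derivative_C_mul, derivative_X_pow]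
  have hn : ((n : ℝ) + 1) ≠ 0 := by positivity
  rw [Nat.add_sub_cancel]
  push_cast
  rw [← mul_assoc, ← C_mul, div_mul_cancel₀ _ hn]

lemma antideriv_eval_zero (q : Polynomial ℝ) : (antideriv q).eval 0 = 0 := by
  rw [antideriv, Polynomial.sum, eval_finset_sum]
  simp

lemma antideriv_natDegree (q : Polynomial ℝ) :
    (antideriv q).natDegree ≤ q.natDegree + 1 := by
  refine natDegree_sum_le_of_forall_le _ _ fun n hn => ?_
  have h1 : n ≤ q.natDegree := le_natDegree_of_mem_supp _ hn
  refine natDegree_mul_le.trans ?_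
  simp only [natDegree_C, natDegree_X_pow, zero_add]
  omega

lemma dvd_step (c : ℝ) (n : ℕ) (F : Polynomial ℝ) (hF : F ≠ 0)
    (hroot : F.eval c = 0) (hdvd : (X - C c) ^ n ∣ derivative F) :
    (X - C c) ^ (n + 1) ∣ F := by
  have hF' : derivative F ≠ 0 := by
    intro h
    apply hF
    rw [eq_C_of_derivative_eq_zero h] at hroot ⊢
    simpa using hroot
  have h1 : n ≤ rootMultiplicity c (derivative F) :=
    (le_rootMultiplicity_iff hF').mpr hdvd
  have h2 := derivative_rootMultiplicity_of_root (p := F) (t := c) hroot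
  have h3 : 0 < rootMultiplicity c F := (rootMultiplicity_pos hF).mpr hroot
  exact (le_rootMultiplicity_iff hF).mp (by omega)

lemma deriv_zero_eval_zero (g : Polynomial ℝ) (h : derivative g = 0)
    (h0 : g.eval 0 = 0) : g = 0 := by
  rw [eq_C_of_derivative_eq_zero h] at h0 ⊢
  simpa using h0

lemma B_ne_zero : (X * (1 - X) : Polynomial ℝ) ≠ 0 := by
  intro h
  have := congrArg (eval (2 : ℝ)) h
  simp at this
  norm_num at this

/-- Exactness of the edge bubble complex
`0 → (λ0λ1)^4 P_{k-7}(e) → (λ0λ1)^3 P_{k-6}(e)/P_0(e) → 0` under `d/dt`,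
on the edge `e = [0,1]` with `λ0 = 1 - t`, `λ1 = t`. -/
theorem stmt_1 (k : ℕ) (hk : 7 ≤ k) :
    (∀ u1 : Polynomial ℝ, u1.natDegree ≤ k - 7 →
      (∃ p : Polynomial ℝ, p.natDegree ≤ k - 6 ∧
        derivative ((X * (1 - X)) ^ 4 * u1) = (X * (1 - X)) ^ 3 * p) ∧
      (∫ t in (0:ℝ)..1, (derivative ((X * (1 - X)) ^ 4 * u1)).eval t = 0)) ∧
    (∀ p : Polynomial ℝ, p.natDegree ≤ k - 6 →
      (∫ t in (0:ℝ)..1, ((X * (1 - X)) ^ 3 * p).eval t = 0) →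
      ∃! u1 : Polynomial ℝ, u1.natDegree ≤ k - 7 ∧
        derivative ((X * (1 - X)) ^ 4 * u1) = (X * (1 - X)) ^ 3 * p) := by
  have hderB : derivative (X * (1 - X) : Polynomial ℝ) = 1 - 2 * X := by
    simp [derivative_mul]
    ring
  constructor
  · intro u1 hu1
    constructor
    · refine ⟨4 * (1 - 2 * X) * u1 + X * (1 - X) * derivative u1, ?_, ?_⟩
      · refine (natDegree_add_le _ _).trans (max_le ?_ ?_)
        · refine natDegree_mul_le.trans ?_
          have h1 : natDegree ((4 : Polynomial ℝ) * (1 - 2 * X)) ≤ 1 := by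
            compute_degree
          omega
        · rcases Nat.eq_zero_or_pos u1.natDegree with h | h
          · have hd0 : derivative u1 = 0 := by
              rw [eq_C_of_natDegree_eq_zero h]; simp
            simp [hd0]
          · refine natDegree_mul_le.trans ?_
            have h1 : natDegree (X * (1 - X) : Polynomial ℝ) ≤ 2 := by
              compute_degree
            have h2 := natDegree_derivative_le u1
            omega
      · rw [derivative_mul, derivative_pow, hderB]
        simp only [Nat.cast_ofNat, map_ofNat]
        ring
    · rw [integral_deriv_poly]
      simp
  · intro p hp hint
    set q : Polynomial ℝ := (X * (1 - X)) ^ 3 * p with hq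
    set F : Polynomial ℝ := antideriv q with hFdef
    have hF' : derivative F = q := antideriv_deriv q
    have hF0 : F.eval 0 = 0 := antideriv_eval_zero q
    have hF1 : F.eval 1 = 0 := by
      have := integral_deriv_poly F
      rw [hF', hint, hF0, sub_zero] at this
      exact this.symm
    have hdvd0 : X ^ 4 ∣ F := by
      rcases eq_or_ne F 0 with h | h
      · simp [h]
      · have hd : (X - C (0:ℝ)) ^ 3 ∣ derivative F := by
          rw [hF', C_0, sub_zero]
          exact ⟨(1 - X) ^ 3 * p, by ring⟩
        have := dvd_step 0 3 F h hF0 hd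
        simpa using this
    have hdvd1 : (X - C (1:ℝ)) ^ 4 ∣ F := by
      rcases eq_or_ne F 0 with h | h
      · simp [h]
      · refine dvd_step 1 3 F h hF1 ?_
        rw [hF', C_1]
        exact ⟨-(X ^ 3 * p), by ring⟩
    have hcop : IsCoprime (X ^ 4 : Polynomial ℝ) ((X - C 1) ^ 4) := by
      refine IsCoprime.pow ?_
      exact ⟨1, -1, by rw [C_1]; ring⟩
    obtain ⟨u, hu⟩ := hcop.mul_dvd hdvd0 hdvd1
    have hFe : F = (X * (1 - X)) ^ 4 * u := by
      rw [hu, C_1]; ring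
    have hder : derivative ((X * (1 - X)) ^ 4 * u) = q := by
      rw [← hFe, hF']
    have hBne : ((X * (1 - X)) ^ 4 : Polynomial ℝ) ≠ 0 := pow_ne_zero _ B_ne_zero
    have hdeg : u.natDegree ≤ k - 7 := by
      rcases eq_or_ne u 0 with h | h
      · simp [h]
      · have hqd : q.natDegree ≤ k := by
          refine natDegree_mul_le.trans ?_
          have h1 : natDegree (((X * (1 - X)) ^ 3 : Polynomial ℝ)) ≤ 6 := by
            compute_degree
          omega
        have hFd : F.natDegree ≤ k + 1 := (antideriv_natDegree q).trans (by omega)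
        have hBd : natDegree ((X * (1 - X)) ^ 4 : Polynomial ℝ) = 8 := by
          compute_degree!
        rw [hFe, natDegree_mul hBne h, hBd] at hFd
        omega
    refine ⟨u, ⟨hdeg, hder⟩, ?_⟩
    rintro v ⟨hvd, hv⟩
    have hzero : (X * (1 - X)) ^ 4 * (v - u) = 0 := by
      refine deriv_zero_eval_zero _ ?_ (by simp)
      rw [mul_sub, map_sub, hv, hder, sub_self]
    have := (mul_eq_zero.mp hzero).resolve_left hBne
    linear_combination (norm := abel) this
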